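/- Let NS be an even lattice with a vector h of square 2, and suppose the orthogonal complement h^⊥ ⊂ NS contains no vectors of square −2. Then for any l₁, l₂ ∈ NS with l₁² = l₂² = −2 and l₁·h = l₂·h = 1, the product l₁·l₂ equals −2 (iff l₁ = l₂), 3 (iff l₂ = h − l₁), 0, or 1, provided NS is hyperbolic (signature (1, rank−1)). -/
import Mathlib


/-- Possible products of line classes in a hyperbolic 2-polarized lattice. -/
theorem line_products_hyperbolic {M : Type*} [AddCommGroup M]
    (b : LinearMap.BilinForm ℤ M) (hsymm : ∀ x y, b x y = b y x)
    (heven : ∀ x : M, 2 ∣ b x x)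
    (h : M) (hh : b h h = 2)
    (hhyp : ∀ x : M, b x h = 0 → x ≠ 0 → b x x < 0)
    (hnoroot : ∀ x : M, b x h = 0 → b x x ≠ -2) :
    ∀ l₁ l₂ : M, b l₁ l₁ = -2 → b l₁ h = 1 → b l₂ l₂ = -2 → b l₂ h = 1 →
      (b l₁ l₂ = -2 ↔ l₁ = l₂) ∧
      (b l₁ l₂ = 3 ↔ l₂ = h - l₁) ∧
      (b l₁ l₂ = -2 ∨ b l₁ l₂ = 3 ∨ b l₁ l₂ = 0 ∨ b l₁ l₂ = 1) := by
  intro l₁ l₂ h11 h1h h22 h2h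
  have hsym : b l₂ l₁ = b l₁ l₂ := hsymm l₂ l₁
  have key1 : l₁ = l₂ ∨ b l₁ l₂ ≥ 0 := by
    by_cases hx : l₁ - l₂ = 0
    · exact Or.inl (sub_eq_zero.mp hx)
    · right
      have hxh : b (l₁ - l₂) h = 0 := by
        simp only [map_sub, LinearMap.sub_apply, h1h, h2h]; ring
      have h1 := hhyp _ hxh hx
      have h2 := hnoroot _ hxh
      have hxx : b (l₁ - l₂) (l₁ - l₂) = -4 - 2 * b l₁ l₂ := by
        simp only [map_sub, LinearMap.sub_apply, h11, h22, hsym]; ring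
      rw [hxx] at h1 h2
      omega
  have key2 : l₂ = h - l₁ ∨ b l₁ l₂ ≤ 1 := by
    by_cases hy : l₁ + l₂ - h = 0
    · left
      have := sub_eq_zero.mp hy
      rw [← this]; abel
    · right
      have hyh : b (l₁ + l₂ - h) h = 0 := by
        simp only [map_sub, map_add, LinearMap.sub_apply, LinearMap.add_apply,
          h1h, h2h, hh]; ring
      have h1 := hhyp _ hyh hy
      have h2 := hnoroot _ hyh
      have hyy : b (l₁ + l₂ - h) (l₁ + l₂ - h) = 2 * b l₁ l₂ - 6 := by
        have e1 : b h l₁ = 1 := (hsymm h l₁).trans h1h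
        have e2 : b h l₂ = 1 := (hsymm h l₂).trans h2h
        simp only [map_sub, map_add, LinearMap.sub_apply, LinearMap.add_apply,
          h11, h22, hh, h1h, h2h, hsym, e1, e2]; ring
      rw [hyy] at h1 h2
      omega
  have back1 : l₁ = l₂ → b l₁ l₂ = -2 := fun e => e ▸ h11
  have back2 : l₂ = h - l₁ → b l₁ l₂ = 3 := by
    intro e; rw [e]
    simp only [map_sub, h1h, h11]
    ring
  refine ⟨⟨fun ha => ?_, back1⟩, ⟨fun ha => ?_, back2⟩, ?_⟩
  · rcases key1 with e | hge
    · exact e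
    · omega
  · rcases key2 with e | hle
    · exact e
    · omega
  · rcases key1 with e | hge
    · exact Or.inl (back1 e)
    · rcases key2 with e | hle
      · exact Or.inr (Or.inl (back2 e))
      · omega
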